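/- Let 0 < ε ≤ 1/2, let ξ₁,…,ξ_k be nonnegative weights with Σᵢ ξᵢ = 1, and let Z₁,…,Z_k be real numbers with |Zᵢ| ≤ ε for all i. Write E_ξZ = Σᵢ ξᵢ Zᵢ and E_ξZ² = Σᵢ ξᵢ Zᵢ². Then | log(1 + E_ξZ) − Σᵢ ξᵢ log(1 + Zᵢ) − (1/2)·( E_ξZ² − (E_ξZ)² ) | ≤ (2/3)·ε³/(1−ε). -/

import Mathlib

open scoped BigOperators
open intervalIntegral

lemma key_log_bound {ε z : ℝ} (hε0 : 0 < ε) (hε : ε ≤ 1/2) (hz : |z| ≤ ε) :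
    |Real.log (1+z) - z + z^2/2| ≤ ε^3 / (3*(1-ε)) := by
  have hε1 : ε < 1 := lt_of_le_of_lt hε (by norm_num)
  have h1ε : 0 < 1 - ε := by linarith
  have hsub : Set.uIcc (0:ℝ) z ⊆ Set.Icc (-ε) ε := by
    apply Set.uIcc_subset_Icc ⟨by linarith, hε0.le⟩
    exact ⟨neg_le_of_abs_le hz, le_of_abs_le hz⟩
  have hpos : ∀ t ∈ Set.uIcc (0:ℝ) z, 1 - ε ≤ 1 + t := by
    intro t ht; have := hsub ht; have := this.1; linarith [this]
  have hderiv : ∀ t ∈ Set.uIcc (0:ℝ) z,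
      HasDerivAt (fun t => Real.log (1+t) - t + t^2/2) (t^2/(1+t)) t := by
    intro t ht
    have hne : 1 + t ≠ 0 := ne_of_gt (by have := hpos t ht; linarith)
    have h1 : HasDerivAt (fun t : ℝ => 1 + t) 1 t := by
      simpa using (hasDerivAt_id t).const_add 1
    have h2 : HasDerivAt (fun t : ℝ => Real.log (1+t)) (1/(1+t)) t := by
      exact ((Real.hasDerivAt_log hne).comp t h1).congr_deriv (by simp)
    have h3 : HasDerivAt (fun t : ℝ => Real.log (1+t) - t + t^2/2)
        (1/(1+t) - 1 + t) t := by
      exact ((h2.sub (hasDerivAt_id t)).add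
        (((hasDerivAt_pow 2 t)).div_const 2)).congr_deriv (by norm_num)
    convert h3 using 1
    field_simp
    ring
  have hcont : ContinuousOn (fun t : ℝ => t^2/(1+t)) (Set.uIcc 0 z) := by
    apply ContinuousOn.div (by fun_prop) (by fun_prop)
    intro t ht; exact ne_of_gt (by have := hpos t ht; linarith)
  have hint : IntervalIntegrable (fun t : ℝ => t^2/(1+t)) MeasureTheory.volume 0 z :=
    hcont.intervalIntegrable
  have heq : Real.log (1+z) - z + z^2/2 = ∫ t in (0:ℝ)..z, t^2/(1+t) := by
    have := integral_eq_sub_of_hasDerivAt hderiv hint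
    simp at this
    linarith [this]
  rw [heq]
  have hintc : IntervalIntegrable (fun t : ℝ => t^2/(1-ε)) MeasureTheory.volume 0 z :=
    (Continuous.div_const (by continuity) _).intervalIntegrable 0 z
  have hcompare : ∀ t ∈ Set.uIcc (0:ℝ) z, t^2/(1+t) ≤ t^2/(1-ε) := by
    intro t ht
    exact div_le_div_of_nonneg_left (sq_nonneg t) h1ε (hpos t ht)
  have hnn : ∀ t ∈ Set.uIcc (0:ℝ) z, 0 ≤ t^2/(1+t) := by
    intro t ht; exact div_nonneg (sq_nonneg t) (by have := hpos t ht; linarith)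
  rcases le_or_gt 0 z with hz0 | hz0
  · rw [abs_of_nonneg (integral_nonneg hz0 (fun t ht => hnn t (by
      rwa [Set.uIcc_of_le hz0])))]
    calc ∫ t in (0:ℝ)..z, t^2/(1+t) ≤ ∫ t in (0:ℝ)..z, t^2/(1-ε) := by
          apply integral_mono_on hz0 hint hintc
          intro t ht; exact hcompare t (by rwa [Set.uIcc_of_le hz0])
      _ = (z^3 - 0^3)/3/(1-ε) := by
          rw [integral_div]
          norm_num [integral_pow]
      _ ≤ ε^3/(3*(1-ε)) := by
          rw [div_div]
          gcongr
          nlinarith [pow_le_pow_left₀ hz0 (le_of_abs_le hz) 3]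
  · rw [← neg_neg (∫ t in (0:ℝ)..z, t^2/(1+t)), ← integral_symm, abs_neg,
      abs_of_nonneg (integral_nonneg hz0.le (fun t ht => hnn t (by
        rw [Set.uIcc_of_ge hz0.le]; exact ht)))]
    calc ∫ t in z..(0:ℝ), t^2/(1+t) ≤ ∫ t in z..(0:ℝ), t^2/(1-ε) := by
          apply integral_mono_on hz0.le hint.symm hintc.symm
          intro t ht; exact hcompare t (by rw [Set.uIcc_of_ge hz0.le]; exact ht)
      _ = (0^3 - z^3)/3/(1-ε) := by
          rw [integral_div]
          norm_num [integral_pow]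
      _ ≤ ε^3/(3*(1-ε)) := by
          rw [div_div]
          gcongr (?_)/(3*(1-ε))
          have hzε : -ε ≤ z := neg_le_of_abs_le hz
          nlinarith [sq_nonneg (z+ε), sq_nonneg z, sq_nonneg ε]


/-- Series-expansion estimate: for |Zᵢ| ≤ ε ≤ 1/2, the error of approximating
log(1+EZ) - E log(1+Z) by the half-variance (1/2)(EZ² - (EZ)²) is at most
(2/3)ε³/(1-ε). -/
theorem stmt_15 (ε : ℝ) (hε0 : 0 < ε) (hε : ε ≤ 1 / 2)
    (k : ℕ) (w : Fin k → ℝ) (hw : ∀ i, 0 ≤ w i) (hw1 : ∑ i, w i = 1)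
    (Z : Fin k → ℝ) (hZ : ∀ i, |Z i| ≤ ε) :
    |Real.log (1 + ∑ i, w i * Z i) - (∑ i, w i * Real.log (1 + Z i))
        - (1 / 2) * ((∑ i, w i * Z i ^ 2) - (∑ i, w i * Z i) ^ 2)|
      ≤ (2 / 3) * ε ^ 3 / (1 - ε) := by
  set S := ∑ i, w i * Z i with hSdef
  have hS : |S| ≤ ε := by
    calc |S| ≤ ∑ i, |w i * Z i| := Finset.abs_sum_le_sum_abs _ _
      _ ≤ ∑ i, w i * ε := Finset.sum_le_sum fun i _ => by
          rw [abs_mul, abs_of_nonneg (hw i)]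
          exact mul_le_mul_of_nonneg_left (hZ i) (hw i)
      _ = ε := by rw [← Finset.sum_mul, hw1, one_mul]
  set R : ℝ → ℝ := fun z => Real.log (1 + z) - z + z ^ 2 / 2 with hR
  have hsplit : ∑ i, w i * R (Z i)
      = (∑ i, w i * Real.log (1 + Z i)) - S + (∑ i, w i * Z i ^ 2) / 2 := by
    simp only [hR, hSdef, mul_sub, mul_add, Finset.sum_add_distrib,
      Finset.sum_sub_distrib, mul_div_assoc, ← Finset.sum_div]
    rw [Finset.sum_div]
    simp [mul_div_assoc]
  have hrw : Real.log (1 + S) - (∑ i, w i * Real.log (1 + Z i))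
        - (1 / 2) * ((∑ i, w i * Z i ^ 2) - S ^ 2)
      = R S - ∑ i, w i * R (Z i) := by
    rw [hsplit, hR]; ring
  rw [hrw]
  have hc := key_log_bound hε0 hε hS
  have hsum : |∑ i, w i * R (Z i)| ≤ ε ^ 3 / (3 * (1 - ε)) := by
    calc |∑ i, w i * R (Z i)| ≤ ∑ i, |w i * R (Z i)| := Finset.abs_sum_le_sum_abs _ _
      _ ≤ ∑ i, w i * (ε ^ 3 / (3 * (1 - ε))) := Finset.sum_le_sum fun i _ => by
          rw [abs_mul, abs_of_nonneg (hw i)]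
          exact mul_le_mul_of_nonneg_left (key_log_bound hε0 hε (hZ i)) (hw i)
      _ = ε ^ 3 / (3 * (1 - ε)) := by rw [← Finset.sum_mul, hw1, one_mul]
  calc |R S - ∑ i, w i * R (Z i)| ≤ |R S| + |∑ i, w i * R (Z i)| := abs_sub _ _
    _ ≤ ε ^ 3 / (3 * (1 - ε)) + ε ^ 3 / (3 * (1 - ε)) := add_le_add hc hsum
    _ = (2 / 3) * ε ^ 3 / (1 - ε) := by
        have h1 : (1:ℝ) - ε ≠ 0 := by
          intro h; rw [sub_eq_zero] at h; linarith
        field_simp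
        ring
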